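/- The ℚ-algebra homomorphism P → P′/(g_{q+1},…,g_{p+q−1}) sending e_i to the class of e_i for 2 ≤ i ≤ p and sending f_j to the class of g_j for 2 ≤ j ≤ q annihilates the ideal I_O and induces a ring isomorphism P/I_O ≅ P′/(g_{q+1},…,g_{p+q−1}). -/

import Mathlib

/-!
Statement 7.  With `P`, `E`, `F`, `I_O` as before and `P′ = ℚ[e₂,…,e_p]`,
`G = E(w)^{q/p} ∈ P′⟦w⟧` with coefficients `g_i`, the ℚ-algebra homomorphism
`P → P′/(g_{q+1},…,g_{p+q−1})` sending `e_i ↦ [e_i]` and `f_j ↦ [g_j]`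
annihilates `I_O` and induces a ring isomorphism
`P/I_O ≅ P′/(g_{q+1},…,g_{p+q−1})` (i.e. it is surjective with kernel `I_O`).
-/

open MvPolynomial

/-- The index set `{i : 2 ≤ i ≤ p}` for the variables `e₂, …, e_p`. -/
abbrev EIdx (p : ℕ) := {i : ℕ // 2 ≤ i ∧ i ≤ p}

/-- The variable set of `P = ℚ[e₂,…,e_p, f₂,…,f_q]`. -/
abbrev EFVar (p q : ℕ) := EIdx p ⊕ EIdx q

/-- The power series `E(w) = 1 + e₂w² + ⋯ + e_p wᵖ` in `P⟦w⟧`. -/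
noncomputable def Eser (p q : ℕ) : PowerSeries (MvPolynomial (EFVar p q) ℚ) :=
  PowerSeries.mk fun n =>
    if n = 0 then 1 else if h : 2 ≤ n ∧ n ≤ p then X (Sum.inl ⟨n, h⟩) else 0

/-- The power series `F(w) = 1 + f₂w² + ⋯ + f_q w^q` in `P⟦w⟧`. -/
noncomputable def Fser (p q : ℕ) : PowerSeries (MvPolynomial (EFVar p q) ℚ) :=
  PowerSeries.mk fun n =>
    if n = 0 then 1 else if h : 2 ≤ n ∧ n ≤ q then X (Sum.inr ⟨n, h⟩) else 0

/-- The ideal `I_O ⊆ P` generated by all coefficients of `E(w)^q − F(w)^p`. -/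
noncomputable def IdealO (p q : ℕ) : Ideal (MvPolynomial (EFVar p q) ℚ) :=
  Ideal.span (Set.range fun n : ℕ =>
    PowerSeries.coeff (R := MvPolynomial (EFVar p q) ℚ) n (Eser p q ^ q - Fser p q ^ p))

/-- The power series `E(w) = 1 + e₂w² + ⋯ + e_p wᵖ` in `P′⟦w⟧`, `P′ = ℚ[e₂,…,e_p]`. -/
noncomputable def Eser' (p : ℕ) : PowerSeries (MvPolynomial (EIdx p) ℚ) :=
  PowerSeries.mk fun n =>
    if n = 0 then 1 else if h : 2 ≤ n ∧ n ≤ p then X ⟨n, h⟩ else 0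

/-- The ideal `(g_{q+1}, …, g_{p+q−1}) ⊆ P′`. -/
noncomputable def IdealG (p q : ℕ) (G : PowerSeries (MvPolynomial (EIdx p) ℚ)) :
    Ideal (MvPolynomial (EIdx p) ℚ) :=
  Ideal.span ((fun j => PowerSeries.coeff (R := MvPolynomial (EIdx p) ℚ) j G) ''
    Set.Icc (q + 1) (p + q - 1))

/-- The ℚ-algebra homomorphism `P → P′/(g_{q+1},…,g_{p+q−1})`, `e_i ↦ [e_i]`, `f_j ↦ [g_j]`. -/
noncomputable def presentMap (p q : ℕ) (G : PowerSeries (MvPolynomial (EIdx p) ℚ)) :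
    MvPolynomial (EFVar p q) ℚ →ₐ[ℚ] (MvPolynomial (EIdx p) ℚ ⧸ IdealG p q G) :=
  aeval (Sum.elim
    (fun i => Ideal.Quotient.mk (IdealG p q G) (X i))
    (fun j => Ideal.Quotient.mk (IdealG p q G)
      (PowerSeries.coeff (R := MvPolynomial (EIdx p) ℚ) j.1 G)))


/-! ### Auxiliary machinery -/

section Dop
open PowerSeries
variable {S : Type*} [CommRing S]

/-- The Euler operator `A ↦ w·dA/dw` on power series. -/
noncomputable def Dop (A : PowerSeries S) : PowerSeries S :=
  PowerSeries.mk fun n => (n : S) * PowerSeries.coeff (R := S) n A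

lemma coeff_Dop (A : PowerSeries S) (n : ℕ) : coeff (R := S) n (Dop A) = (n : S) * coeff (R := S) n A := by
  simp [Dop]

lemma Dop_mul (A B : PowerSeries S) : Dop (A * B) = Dop A * B + A * Dop B := by
  ext n
  simp only [coeff_Dop, map_add, PowerSeries.coeff_mul, Finset.mul_sum]
  rw [← Finset.sum_add_distrib]
  refine Finset.sum_congr rfl fun x hx => ?_
  rw [Finset.HasAntidiagonal.mem_antidiagonal] at hx
  rw [← hx]
  push_cast
  ring

lemma Dop_pow (A : PowerSeries S) (k : ℕ) :
    Dop (A ^ (k + 1)) = PowerSeries.C (R := S) ((k : S) + 1) * (A ^ k * Dop A) := by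
  induction k with
  | zero => simp
  | succ k ih =>
    have h : A ^ (k + 1 + 1) = A ^ (k + 1) * A := by ring
    rw [h, Dop_mul, ih]
    have hC : (PowerSeries.C (R := S) ((↑(k+1) : S) + 1)) = PowerSeries.C (R := S) ((k : S) + 1) + 1 := by
      push_cast; rw [map_add, map_one]
    rw [hC]
    ring

lemma Dop_pow' (A : PowerSeries S) (m : ℕ) (hm : 0 < m) :
    Dop (A ^ m) = PowerSeries.C (R := S) (m : S) * (A ^ (m - 1) * Dop A) := by
  obtain ⟨k, rfl⟩ := Nat.exists_eq_succ_of_ne_zero hm.ne'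
  simpa using Dop_pow A k

lemma ps_map_map {S T U : Type*} [CommRing S] [CommRing T] [CommRing U]
    (f : S →+* T) (g : T →+* U) (A : PowerSeries S) :
    PowerSeries.map g (PowerSeries.map f A) = PowerSeries.map (g.comp f) A := by
  ext n
  simp [PowerSeries.coeff_map]

/-- Uniqueness of `k`-th roots of power series with constant coefficient 1
over a `ℚ`-algebra. -/
lemma root_unique {S : Type*} [CommRing S] [Algebra ℚ S] (A B : PowerSeries S)
    (hA : constantCoeff (R := S) A = 1) (hB : constantCoeff (R := S) B = 1) (k : ℕ) (hk : 0 < k)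
    (h : A ^ k = B ^ k) : A = B := by
  have hfac : (∑ i ∈ Finset.range k, A ^ i * B ^ (k - 1 - i)) * (A - B) = A ^ k - B ^ k :=
    geom_sum₂_mul A B k
  rw [h, sub_self] at hfac
  have hc : constantCoeff (R := S) (∑ i ∈ Finset.range k, A ^ i * B ^ (k - 1 - i)) = (k : S) := by
    rw [map_sum]
    have h1 : ∀ i ∈ Finset.range k, constantCoeff (R := S) (A ^ i * B ^ (k-1-i)) = 1 := by
      intro i _
      rw [map_mul, map_pow, map_pow, hA, hB, one_pow, one_pow, one_mul]
    rw [Finset.sum_congr rfl h1]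
    simp
  have hku : IsUnit ((k : ℚ)) := isUnit_iff_ne_zero.mpr (by exact_mod_cast hk.ne')
  have hkS : IsUnit ((k : S)) := by
    have := hku.map (algebraMap ℚ S)
    rwa [map_natCast] at this
  have hu : IsUnit (∑ i ∈ Finset.range k, A ^ i * B ^ (k - 1 - i)) := by
    rw [PowerSeries.isUnit_iff_constantCoeff, hc]; exact hkS
  exact sub_eq_zero.mp ((IsUnit.mul_right_eq_zero hu).mp hfac)

end Dop

section Main
open PowerSeries

variable (p q : ℕ)

local notation "R'" => MvPolynomial (EIdx p) ℚ
local notation "RR" => MvPolynomial (EFVar p q) ℚ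

lemma constCoeff_Eser' : constantCoeff (R := R') (Eser' p) = 1 := by
  simp [Eser', ← coeff_zero_eq_constantCoeff]

lemma coeff_Eser'_zero : coeff (R := R') 0 (Eser' p) = 1 := by simp [Eser']

lemma coeff_Eser'_of_not (n : ℕ) (h1 : n ≠ 0) (h2 : ¬(2 ≤ n ∧ n ≤ p)) :
    coeff (R := R') n (Eser' p) = 0 := by
  simp [Eser', h1, h2]

lemma main_identity (hp : 0 < p) (hq : 0 < q) (G : PowerSeries R')
    (hGp : G ^ p = Eser' p ^ q) :
    PowerSeries.C (R := R') (p : R') * (Dop G * Eser' p) =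
      PowerSeries.C (R := R') (q : R') * (Dop (Eser' p) * G) := by
  set E := Eser' p with hE
  have h1 : PowerSeries.C (R := R') (p : R') * (G ^ (p-1) * Dop G)
      = PowerSeries.C (R := R') (q : R') * (E ^ (q-1) * Dop E) := by
    rw [← Dop_pow' G p hp, ← Dop_pow' E q hq, hGp]
  have hGp1 : G ^ (p-1) * G = G ^ p := by
    rw [← pow_succ]; congr 1; omega
  have hEq1 : E ^ (q-1) * E = E ^ q := by
    rw [← pow_succ]; congr 1; omega
  have h2 : E ^ q * (PowerSeries.C (R := R') (p : R') * (Dop G * E))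
      = E ^ q * (PowerSeries.C (R := R') (q : R') * (Dop E * G)) := by
    calc E ^ q * (PowerSeries.C (R := R') (p : R') * (Dop G * E))
        = (PowerSeries.C (R := R') (p : R') * (G ^ (p-1) * Dop G)) * (G * E) := by
          rw [← hGp, ← hGp1]; ring
      _ = (PowerSeries.C (R := R') (q : R') * (E ^ (q-1) * Dop E)) * (G * E) := by rw [h1]
      _ = E ^ q * (PowerSeries.C (R := R') (q : R') * (Dop E * G)) := by rw [← hEq1]; ring
  have hEu : IsUnit (E ^ q) := by
    rw [PowerSeries.isUnit_iff_constantCoeff, map_pow, constCoeff_Eser', one_pow]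
    exact isUnit_one
  exact hEu.mul_left_cancel h2

lemma key_identity (hp : 0 < p) (hq : 0 < q) (G : PowerSeries R')
    (hGp : G ^ p = Eser' p ^ q) (n : ℕ) :
    ∑ i ∈ Finset.range (n + 1),
      ((p : R') * i - (q : R') * ((n - i : ℕ) : R')) *
        (coeff (R := R') i G * coeff (R := R') (n - i) (Eser' p)) = 0 := by
  set E := Eser' p with hE
  have h2 := main_identity p q hp hq G hGp
  have hA : coeff (R := R') n (PowerSeries.C (R := R') (p : R') * (Dop G * E)) =
      ∑ i ∈ Finset.range (n+1), (p : R') * (i : R') * coeff (R := R') i G * coeff (R := R') (n-i) E := by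
    rw [PowerSeries.coeff_C_mul, PowerSeries.coeff_mul,
      Finset.Nat.sum_antidiagonal_eq_sum_range_succ_mk, Finset.mul_sum]
    exact Finset.sum_congr rfl fun i _ => by rw [coeff_Dop]; ring
  have hB : coeff (R := R') n (PowerSeries.C (R := R') (q : R') * (Dop E * G)) =
      ∑ i ∈ Finset.range (n+1), (q : R') * ((n-i : ℕ) : R') * coeff (R := R') (n-i) E * coeff (R := R') i G := by
    rw [PowerSeries.coeff_C_mul, PowerSeries.coeff_mul,
      Finset.Nat.sum_antidiagonal_eq_sum_range_succ_mk, Finset.mul_sum]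
    conv_rhs => rw [← Finset.sum_range_reflect]
    refine Finset.sum_congr rfl fun i hi => ?_
    rw [Finset.mem_range] at hi
    have h5 : n + 1 - 1 - i = n - i := by omega
    have h6 : n - (n - i) = i := by omega
    rw [h5, h6, coeff_Dop]
    ring
  have hmain : ∑ i ∈ Finset.range (n + 1),
      ((p : R') * i - (q : R') * ((n - i : ℕ) : R')) *
        (coeff (R := R') i G * coeff (R := R') (n - i) E)
      = coeff (R := R') n (PowerSeries.C (R := R') (p : R') * (Dop G * E))
        - coeff (R := R') n (PowerSeries.C (R := R') (q : R') * (Dop E * G)) := by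
    rw [hA, hB, ← Finset.sum_sub_distrib]
    exact Finset.sum_congr rfl fun i _ => by ring
  rw [hmain, h2, sub_self]

lemma g_one_zero (hp : 0 < p) (hq : 0 < q) (G : PowerSeries R')
    (hGp : G ^ p = Eser' p ^ q) : coeff (R := R') 1 G = 0 := by
  have hk := key_identity p q hp hq G hGp 1
  rw [Finset.sum_range_succ, Finset.sum_range_succ, Finset.range_zero,
    Finset.sum_empty] at hk
  have he1 : coeff (R := R') (1 - 0) (Eser' p) = 0 := by
    rw [coeff_Eser'_of_not p 1 one_ne_zero (by omega)]
  rw [he1, Nat.sub_self, coeff_Eser'_zero] at hk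
  have hk2 : (p : R') * coeff (R := R') 1 G = 0 := by
    have := hk
    push_cast at this
    linear_combination this
  have hpz : (p : R') ≠ 0 := by
    exact_mod_cast (Nat.cast_ne_zero (R := R')).mpr hp.ne'
  rcases mul_eq_zero.mp hk2 with h | h
  · exact absurd h hpz
  · exact h

lemma g_mem (hp : 0 < p) (hq : 0 < q) (G : PowerSeries R')
    (hGp : G ^ p = Eser' p ^ q) :
    ∀ n, q + 1 ≤ n → coeff (R := R') n G ∈ IdealG p q G := by
  intro n
  induction n using Nat.strong_induction_on with
  | _ n IH =>
    intro hn
    by_cases hcase : n ≤ p + q - 1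
    · exact Ideal.subset_span ⟨n, Set.mem_Icc.mpr ⟨hn, hcase⟩, rfl⟩
    · have hnpq : p + q ≤ n := by omega
      have hk := key_identity p q hp hq G hGp n
      rw [Finset.sum_range_succ] at hk
      have hterm : ∀ i ∈ Finset.range n,
          ((p : R') * i - (q : R') * ((n - i : ℕ) : R')) *
            (coeff (R := R') i G * coeff (R := R') (n - i) (Eser' p)) ∈ IdealG p q G := by
        intro i hi
        rw [Finset.mem_range] at hi
        by_cases hij : 2 ≤ n - i ∧ n - i ≤ p
        · by_cases hi2 : q + 1 ≤ i
          · exact Ideal.mul_mem_left _ _ (Ideal.mul_mem_right _ _ (IH i hi hi2))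
          · have hiq : i = q := by omega
            have hnp : n - q = p := by omega
            rw [hiq, hnp]
            have hz : (p : R') * (q : ℕ) - (q : R') * ((p : ℕ) : R') = 0 := by
              push_cast; ring
            rw [hz, zero_mul]
            exact Ideal.zero_mem _
        · rw [coeff_Eser'_of_not p (n - i) (by omega) hij, mul_zero, mul_zero]
          exact Ideal.zero_mem _
      have hsum : ∑ i ∈ Finset.range n,
          ((p : R') * i - (q : R') * ((n - i : ℕ) : R')) *
            (coeff (R := R') i G * coeff (R := R') (n - i) (Eser' p)) ∈ IdealG p q G :=
        Ideal.sum_mem _ hterm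
      have hlastmem : ((p : R') * n - (q : R') * ((n - n : ℕ) : R')) *
          (coeff (R := R') n G * coeff (R := R') (n - n) (Eser' p)) ∈ IdealG p q G := by
        have heq : ((p : R') * n - (q : R') * ((n - n : ℕ) : R')) *
            (coeff (R := R') n G * coeff (R := R') (n - n) (Eser' p))
            = -(∑ i ∈ Finset.range n,
              ((p : R') * i - (q : R') * ((n - i : ℕ) : R')) *
                (coeff (R := R') i G * coeff (R := R') (n - i) (Eser' p))) := by
          linear_combination hk
        rw [heq]
        exact neg_mem hsum
      have hlast : ((p : R') * n - (q : R') * ((n - n : ℕ) : R')) *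
          (coeff (R := R') n G * coeff (R := R') (n - n) (Eser' p))
          = ((p * n : ℕ) : R') * coeff (R := R') n G := by
        rw [Nat.sub_self, coeff_Eser'_zero]
        push_cast
        ring
      rw [hlast] at hlastmem
      have hpn : ((p * n : ℕ) : ℚ) ≠ 0 := by
        have h0 : p * n ≠ 0 := Nat.mul_ne_zero hp.ne' (by omega)
        exact_mod_cast h0
      have hfin : coeff (R := R') n G = algebraMap ℚ R' (((p * n : ℕ) : ℚ))⁻¹ *
          (((p * n : ℕ) : R') * coeff (R := R') n G) := by
        have hcast : ((p * n : ℕ) : R') = algebraMap ℚ R' ((p * n : ℕ) : ℚ) := by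
          simp
        rw [hcast, ← mul_assoc, ← map_mul, inv_mul_cancel₀ hpn, map_one, one_mul]
      rw [hfin]
      exact Ideal.mul_mem_left _ _ hlastmem

end Main

section Homs
open PowerSeries

variable (p q : ℕ) (G : PowerSeries (MvPolynomial (EIdx p) ℚ))

local notation "R'" => MvPolynomial (EIdx p) ℚ
local notation "RR" => MvPolynomial (EFVar p q) ℚ

/-- `P → P′`, `e_i ↦ e_i`, `f_j ↦ g_j`. -/
noncomputable def phi0 : RR →ₐ[ℚ] R' :=
  aeval (Sum.elim (fun i => X i) (fun j => PowerSeries.coeff (R := R') j.1 G))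

/-- `P′ → P`, `e_i ↦ e_i`. -/
noncomputable def psi0 : R' →ₐ[ℚ] RR :=
  aeval (fun i => X (Sum.inl i))

lemma presentMap_eq :
    presentMap p q G =
      (Ideal.Quotient.mkₐ ℚ (IdealG p q G)).comp (phi0 p q G) := by
  unfold presentMap phi0
  rw [MvPolynomial.comp_aeval]
  congr 1
  funext s
  cases s <;> rfl

lemma phi0_comp_psi0 (x : R') : phi0 p q G (psi0 p q x) = x := by
  have h : (phi0 p q G).comp (psi0 p q) = AlgHom.id ℚ R' := by
    apply algHom_ext
    intro i
    simp [phi0, psi0]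
  calc phi0 p q G (psi0 p q x) = ((phi0 p q G).comp (psi0 p q)) x := rfl
    _ = x := by rw [h]; rfl

lemma map_phi0_Eser :
    PowerSeries.map (phi0 p q G).toRingHom (Eser p q) = Eser' p := by
  refine PowerSeries.ext fun n => ?_
  rw [PowerSeries.coeff_map]
  simp only [Eser, Eser', PowerSeries.coeff_mk]
  split_ifs with h1 h2
  · exact map_one _
  · simp [phi0]
  · exact map_zero _

lemma map_psi0_Eser' :
    PowerSeries.map (psi0 p q).toRingHom (Eser' p) = Eser p q := by
  refine PowerSeries.ext fun n => ?_
  rw [PowerSeries.coeff_map]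
  simp only [Eser, Eser', PowerSeries.coeff_mk]
  split_ifs with h1 h2
  · exact map_one _
  · simp [psi0]
  · exact map_zero _

lemma map_phi0_Fser (hp : 0 < p) (hq : 0 < q)
    (hG1 : PowerSeries.constantCoeff (R := R') G = 1)
    (hGp : G ^ p = Eser' p ^ q) :
    PowerSeries.map ((Ideal.Quotient.mk (IdealG p q G)).comp (phi0 p q G).toRingHom)
        (Fser p q)
      = PowerSeries.map (Ideal.Quotient.mk (IdealG p q G)) G := by
  refine PowerSeries.ext fun n => ?_
  rw [PowerSeries.coeff_map, PowerSeries.coeff_map]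
  simp only [Fser, PowerSeries.coeff_mk]
  split_ifs with h1 h2
  · subst h1
    rw [map_one, ← coeff_zero_eq_constantCoeff_apply, hG1] at *
    rw [hG1]
    exact (map_one _).symm
  · simp only [RingHom.comp_apply]
    congr 1
    simp [phi0]
  · rw [map_zero]
    rcases Nat.lt_or_ge n (q + 1) with hlt | hge
    · have hn1 : n = 1 := by omega
      rw [hn1, g_one_zero p q hp hq G hGp, map_zero]
    · rw [eq_comm, Ideal.Quotient.eq_zero_iff_mem]
      exact g_mem p q hp hq G hGp n hge

lemma coeff_EqFp_mem (n : ℕ) :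
    PowerSeries.coeff (R := RR) n (Eser p q ^ q - Fser p q ^ p) ∈ IdealO p q :=
  Ideal.subset_span ⟨n, rfl⟩

lemma map_pi_EqFp :
    PowerSeries.map (Ideal.Quotient.mk (IdealO p q)) (Eser p q ^ q)
      = PowerSeries.map (Ideal.Quotient.mk (IdealO p q)) (Fser p q ^ p) := by
  refine PowerSeries.ext fun n => ?_
  rw [PowerSeries.coeff_map, PowerSeries.coeff_map, ← sub_eq_zero, ← map_sub, ← map_sub,
    Ideal.Quotient.eq_zero_iff_mem]
  exact coeff_EqFp_mem p q n

end Homs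

theorem presentation_Oqp (p q : ℕ) (hp : 0 < p) (hq : 0 < q) (hpq : Nat.Coprime p q)
    (G : PowerSeries (MvPolynomial (EIdx p) ℚ))
    (hG1 : PowerSeries.constantCoeff (R := MvPolynomial (EIdx p) ℚ) G = 1)
    (hGp : G ^ p = Eser' p ^ q) :
    RingHom.ker (presentMap p q G) = IdealO p q ∧
      Function.Surjective (presentMap p q G) := by
  classical
  have hpres := presentMap_eq p q G
  -- Part 1 : IdealO ≤ ker
  have hIker : IdealO p q ≤ RingHom.ker (presentMap p q G) := by
    rw [IdealO, Ideal.span_le]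
    rintro x ⟨n, rfl⟩
    simp only [SetLike.mem_coe, RingHom.mem_ker]
    have hfE : PowerSeries.map ((Ideal.Quotient.mk (IdealG p q G)).comp
          (phi0 p q G).toRingHom) (Eser p q)
        = PowerSeries.map (Ideal.Quotient.mk (IdealG p q G)) (Eser' p) := by
      rw [← ps_map_map, map_phi0_Eser]
    have hfF := map_phi0_Fser p q G hp hq hG1 hGp
    have hzero : PowerSeries.map ((Ideal.Quotient.mk (IdealG p q G)).comp
          (phi0 p q G).toRingHom) (Eser p q ^ q - Fser p q ^ p) = 0 := by
      rw [map_sub, map_pow, map_pow, hfE, hfF, ← map_pow, ← map_pow, ← hGp, sub_self]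
    have hco : presentMap p q G
          (PowerSeries.coeff (R := (MvPolynomial (EFVar p q) ℚ)) n (Eser p q ^ q - Fser p q ^ p))
        = PowerSeries.coeff n (PowerSeries.map ((Ideal.Quotient.mk (IdealG p q G)).comp
            (phi0 p q G).toRingHom) (Eser p q ^ q - Fser p q ^ p)) := by
      rw [PowerSeries.coeff_map, hpres]
      rfl
    rw [hco, hzero, map_zero]
  -- Part 2 : the inverse map χ
  set ρ : MvPolynomial (EIdx p) ℚ →ₐ[ℚ] (MvPolynomial (EFVar p q) ℚ ⧸ IdealO p q) :=
    (Ideal.Quotient.mkₐ ℚ (IdealO p q)).comp (psi0 p q) with hρ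
  have hρring : ρ.toRingHom
      = (Ideal.Quotient.mk (IdealO p q)).comp (psi0 p q).toRingHom := rfl
  have hρG : PowerSeries.map ρ.toRingHom G
      = PowerSeries.map (Ideal.Quotient.mk (IdealO p q)) (Fser p q) := by
    refine root_unique _ _ ?_ ?_ p hp ?_
    · rw [← PowerSeries.coeff_zero_eq_constantCoeff_apply, PowerSeries.coeff_map,
        PowerSeries.coeff_zero_eq_constantCoeff_apply, hG1, map_one]
    · rw [← PowerSeries.coeff_zero_eq_constantCoeff_apply, PowerSeries.coeff_map]
      have h0 : PowerSeries.coeff 0 (Fser p q) = 1 := by simp [Fser]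
      rw [h0, map_one]
    · rw [← map_pow, ← map_pow, hGp, map_pow, hρring, ← ps_map_map, map_psi0_Eser',
        ← map_pow, map_pi_EqFp, map_pow]
  have hJker : ∀ a : MvPolynomial (EIdx p) ℚ, a ∈ IdealG p q G → ρ a = 0 := by
    have hle : IdealG p q G ≤ RingHom.ker ρ.toRingHom := by
      rw [IdealG, Ideal.span_le]
      rintro x ⟨j, hj, rfl⟩
      rw [Set.mem_Icc] at hj
      simp only [SetLike.mem_coe, RingHom.mem_ker]
      have h1 : ρ.toRingHom (PowerSeries.coeff j G)
          = PowerSeries.coeff j (PowerSeries.map ρ.toRingHom G) := by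
        rw [PowerSeries.coeff_map]
      have h2 : PowerSeries.coeff j (Fser p q) = 0 := by
        have hj0 : j ≠ 0 := by omega
        have hj2 : ¬(2 ≤ j ∧ j ≤ q) := by omega
        simp [Fser, hj0, hj2]
      show ρ.toRingHom (PowerSeries.coeff j G) = 0
      rw [h1, hρG, PowerSeries.coeff_map, h2, map_zero]
    intro a ha
    exact hle ha
  set χ := Ideal.Quotient.liftₐ (IdealG p q G) ρ hJker with hχ
  have hχmk : ∀ y, χ (Ideal.Quotient.mk (IdealG p q G) y) = ρ y := by
    intro y
    rw [hχ, Ideal.Quotient.liftₐ_apply]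
    rfl
  have hcomp : χ.comp (presentMap p q G) = Ideal.Quotient.mkₐ ℚ (IdealO p q) := by
    apply algHom_ext
    intro s
    cases s with
    | inl i =>
      have h1 : presentMap p q G (X (Sum.inl i)) =
          Ideal.Quotient.mk (IdealG p q G) (X i) := by
        simp [presentMap]
      show χ (presentMap p q G (X (Sum.inl i))) = _
      rw [h1, hχmk]
      simp [hρ, psi0]
    | inr j =>
      obtain ⟨jv, hjv⟩ := j
      set j : EIdx q := ⟨jv, hjv⟩ with hjdef
      have h1 : presentMap p q G (X (Sum.inr j)) =
          Ideal.Quotient.mk (IdealG p q G) (PowerSeries.coeff j.1 G) := by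
        simp [presentMap]
      show χ (presentMap p q G (X (Sum.inr j))) = _
      rw [h1, hχmk]
      have h2 : ρ (PowerSeries.coeff j.1 G)
          = PowerSeries.coeff j.1 (PowerSeries.map ρ.toRingHom G) := by
        rw [PowerSeries.coeff_map]
        rfl
      have h3 : PowerSeries.coeff j.1 (Fser p q) = X (Sum.inr j) := by
        have hj0 : jv ≠ 0 := by have := hjv.1; omega
        simp only [Fser, PowerSeries.coeff_mk, hjdef]
        rw [if_neg hj0, dif_pos hjv]
      rw [h2, hρG, PowerSeries.coeff_map, h3]
      rfl
  have hkerle : RingHom.ker (presentMap p q G) ≤ IdealO p q := by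
    intro x hx
    rw [RingHom.mem_ker] at hx
    have h1 : χ (presentMap p q G x) = Ideal.Quotient.mk (IdealO p q) x := by
      have := DFunLike.congr_fun hcomp x
      simpa using this
    rw [hx, map_zero] at h1
    exact (Ideal.Quotient.eq_zero_iff_mem).mp h1.symm
  refine ⟨le_antisymm hkerle hIker, ?_⟩
  intro y
  obtain ⟨z, rfl⟩ := Ideal.Quotient.mk_surjective y
  refine ⟨psi0 p q z, ?_⟩
  rw [hpres]
  show Ideal.Quotient.mkₐ ℚ (IdealG p q G) (phi0 p q G (psi0 p q z)) = _
  rw [phi0_comp_psi0]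
  rfl
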